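/- Let d ≥ 1, λ ≥ 0, K ≥ 0, and let φ : ℝ^d → ℝ be K-Lipschitz and λ-concave. Then for every t > 0 the Hopf–Lax function u_t is λ/(1+λt)-concave, i.e. x ↦ u_t(x) − (λ/(2(1+λt)))‖x‖² is concave on ℝ^d. -/
import Mathlib

open scoped RealInnerProductSpace
noncomputable section

/-- The Hopf–Lax function `u_t(x) = inf_y (‖x−y‖²/(2t) + φ(y))`. -/
def hopfLax {d : ℕ} (φ : EuclideanSpace ℝ (Fin d) → ℝ) (t : ℝ)
    (x : EuclideanSpace ℝ (Fin d)) : ℝ :=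
  ⨅ y : EuclideanSpace ℝ (Fin d), (‖x - y‖ ^ 2 / (2 * t) + φ y)

theorem stmt0 (d : ℕ) (hd : 1 ≤ d) (lam K : ℝ) (hlam : 0 ≤ lam) (hK : 0 ≤ K)
    (φ : EuclideanSpace ℝ (Fin d) → ℝ)
    (hLip : ∀ y z, |φ y - φ z| ≤ K * ‖y - z‖)
    (hConc : ConcaveOn ℝ Set.univ (fun y => φ y - lam / 2 * ‖y‖ ^ 2))
    (t : ℝ) (ht : 0 < t) :
    ConcaveOn ℝ Set.univ
      (fun x => hopfLax φ t x - lam / (2 * (1 + lam * t)) * ‖x‖ ^ 2) := by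
  have hs : (0:ℝ) < 1 + lam * t := by positivity
  have hs' : (1 + lam * t) ≠ 0 := ne_of_gt hs
  have ht' : t ≠ 0 := ne_of_gt ht
  -- key algebraic identity
  have key : ∀ X y : EuclideanSpace ℝ (Fin d),
      ‖X - y‖ ^ 2 / (2 * t) + lam / 2 * ‖y‖ ^ 2
        - lam / (2 * (1 + lam * t)) * ‖X‖ ^ 2
      = (1 + lam * t) / (2 * t) * ‖y - (1 + lam * t)⁻¹ • X‖ ^ 2 := by
    intro X y
    rw [norm_sub_sq_real, norm_sub_sq_real, real_inner_smul_right, norm_smul]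
    rw [real_inner_comm y X]
    rw [Real.norm_eq_abs, abs_of_pos (inv_pos.mpr hs)]
    field_simp
    ring
  -- lower bound for the infimum
  have hbdd : ∀ x : EuclideanSpace ℝ (Fin d),
      BddBelow (Set.range fun y : EuclideanSpace ℝ (Fin d) =>
        ‖x - y‖ ^ 2 / (2 * t) + φ y) := by
    intro x
    refine ⟨φ x - K ^ 2 * t / 2, ?_⟩
    rintro _ ⟨y, rfl⟩
    have h1 : φ x - φ y ≤ K * ‖x - y‖ := (abs_le.mp (hLip x y)).2
    have h2 : K * ‖x - y‖ - K ^ 2 * t / 2 ≤ ‖x - y‖ ^ 2 / (2 * t) := by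
      rw [le_div_iff₀ (by positivity)]
      nlinarith [sq_nonneg (‖x - y‖ - K * t)]
    linarith
  constructor
  · exact convex_univ
  intro x _ z _ a b ha hb hab
  simp only [smul_eq_mul]
  set X := a • x + b • z with hX
  rw [le_sub_iff_add_le]
  refine le_ciInf fun y => ?_
  set s := 1 + lam * t with hsdef
  set w := y - s⁻¹ • X with hw
  set y₀ := s⁻¹ • x + w with hy0
  set y₁ := s⁻¹ • z + w with hy1
  have hy : y = a • y₀ + b • y₁ := by
    have h : a • y₀ + b • y₁ = s⁻¹ • (a • x + b • z) + (a + b) • w := by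
      rw [hy0, hy1]; module
    rw [h, hab, one_smul, hw, ← hX]
    abel
  have hw0 : y₀ - s⁻¹ • x = w := by rw [hy0]; abel
  have hw1 : y₁ - s⁻¹ • z = w := by rw [hy1]; abel
  set M := s / (2 * t) * ‖w‖ ^ 2 with hM
  have keyX := key X y
  have keyx := key x y₀
  have keyz := key z y₁
  rw [hw0] at keyx
  rw [hw1] at keyz
  have hψ : a * (φ y₀ - lam / 2 * ‖y₀‖ ^ 2) + b * (φ y₁ - lam / 2 * ‖y₁‖ ^ 2)
      ≤ φ y - lam / 2 * ‖y‖ ^ 2 := by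
    have := hConc.2 (Set.mem_univ y₀) (Set.mem_univ y₁) ha hb hab
    simp only [smul_eq_mul] at this
    rw [hy]
    exact this
  have hux : hopfLax φ t x ≤ ‖x - y₀‖ ^ 2 / (2 * t) + φ y₀ := ciInf_le (hbdd x) y₀
  have huz : hopfLax φ t z ≤ ‖z - y₁‖ ^ 2 / (2 * t) + φ y₁ := ciInf_le (hbdd z) y₁
  have h1 : a * (hopfLax φ t x - lam / (2 * s) * ‖x‖ ^ 2)
      ≤ a * (M + (φ y₀ - lam / 2 * ‖y₀‖ ^ 2)) := by
    apply mul_le_mul_of_nonneg_left _ ha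
    linarith
  have h2 : b * (hopfLax φ t z - lam / (2 * s) * ‖z‖ ^ 2)
      ≤ b * (M + (φ y₁ - lam / 2 * ‖y₁‖ ^ 2)) := by
    apply mul_le_mul_of_nonneg_left _ hb
    linarith
  have habM : a * M + b * M = M := by rw [← add_mul, hab, one_mul]
  linarith [h1, h2, hψ, keyX, habM]
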